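/- arXiv:1702.05426 — 3 statements merged into one kernel-verified Lean document; each statement's English description precedes it below -/
import Mathlib

section
/- Let f : ℝ → ℝ be nonnegative and nonincreasing on [2,∞), and suppose the integral ∫₂^∞ f(x)/ln(x) dx is finite. Then the sum of f over the prime numbers converges, i.e. ∑_{p prime} f(p) < ∞. -/
open Finset in
lemma count_primes_block' : ∀ k : ℕ,
    ((Finset.Ioc (2^k) (2^(k+1))).filter Nat.Prime).card * k ≤ 2^(k+2) := by
  intro k
  set B := (Finset.Ioc (2^k) (2^(k+1))).filter Nat.Prime with hB
  have h2 : (2^k)^B.card ≤ ∏ p ∈ B, p := by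
    rw [← Finset.prod_const]
    exact Finset.prod_le_prod' fun p hp =>
      le_of_lt (Finset.mem_Ioc.1 (Finset.mem_filter.1 hp).1).1
  have h3 : ∏ p ∈ B, p ≤ primorial (2^(k+1)) := by
    apply Finset.prod_le_prod_of_subset_of_one_le'
    · intro p hp
      rw [Finset.mem_filter] at hp ⊢
      exact ⟨Finset.mem_range.2 (Nat.lt_succ_of_le (Finset.mem_Ioc.1 hp.1).2), hp.2⟩
    · intro i hi _
      exact (Finset.mem_filter.1 hi).2.one_lt.le
  have h4 : (2:ℕ)^(k*B.card) ≤ 2^(2^(k+2)) := by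
    calc (2:ℕ)^(k*B.card) = (2^k)^B.card := by rw [pow_mul]
    _ ≤ primorial (2^(k+1)) := le_trans h2 h3
    _ ≤ 4^(2^(k+1)) := primorial_le_4_pow _
    _ = 2^(2^(k+2)) := by
        rw [show (4:ℕ) = 2^2 from rfl, ← pow_mul, pow_succ 2 (k+1)]
        ring_nf
  rw [mul_comm]
  exact (Nat.pow_le_pow_iff_right one_lt_two).1 h4

open MeasureTheory Finset in
lemma block_bound (f : ℝ → ℝ)
    (hf_nonneg : ∀ x ∈ Set.Ici (2 : ℝ), 0 ≤ f x)
    (hf_anti : AntitoneOn f (Set.Ici (2 : ℝ)))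
    (hf_int : MeasureTheory.IntegrableOn (fun x => f x / Real.log x) (Set.Ici (2 : ℝ)))
    (hcount : ∀ k : ℕ, ((Finset.Ioc (2^k) (2^(k+1))).filter Nat.Prime).card * k ≤ 2^(k+2))
    (k : ℕ) (hk : 1 ≤ k) :
    ∑ p ∈ (Finset.Ioc (2^(k+1)) (2^(k+2))).filter Nat.Prime, (f p : ℝ) ≤
      8 * Real.log 2 * ∫ x in Set.Ioc ((2:ℝ)^k) (2^(k+1)), f x / Real.log x := by
  set B := (Finset.Ioc (2^(k+1)) (2^(k+2))).filter Nat.Prime with hB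
  set c := f ((2:ℝ)^(k+1)) with hc
  have h2k : (2:ℝ) ≤ 2^k := le_self_pow₀ one_le_two (by omega)
  have h2k1 : (2:ℝ) ≤ 2^(k+1) := le_self_pow₀ one_le_two (by omega)
  have hc0 : 0 ≤ c := hf_nonneg _ h2k1
  have hlog2 : (0:ℝ) < Real.log 2 := Real.log_pos one_lt_two
  -- each term bounded by c
  have hstep1 : ∑ p ∈ B, (f p : ℝ) ≤ B.card * c := by
    rw [← nsmul_eq_mul]
    apply Finset.sum_le_card_nsmul
    intro p hp
    have hp' := Finset.mem_Ioc.1 (Finset.mem_filter.1 hp).1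
    have hpc : ((2:ℝ)^(k+1)) ≤ (p:ℝ) := by
      have h := Nat.cast_le (α := ℝ) |>.2 hp'.1.le
      push_cast at h
      exact h
    exact hf_anti h2k1 (le_trans h2k1 hpc) hpc
  -- count bound
  have hstep2 : (B.card : ℝ) ≤ 2^(k+3) / (k+1) := by
    rw [le_div_iff₀ (by positivity)]
    have := hcount (k+1)
    have : ((B.card * (k+1) : ℕ) : ℝ) ≤ ((2^(k+3) : ℕ) : ℝ) := Nat.cast_le.2 this
    push_cast at this
    linarith
  -- integral lower bound
  have hsub : Set.Ioc ((2:ℝ)^k) (2^(k+1)) ⊆ Set.Ici 2 := fun x hx => le_trans h2k hx.1.le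
  have hint : IntegrableOn (fun x => f x / Real.log x) (Set.Ioc ((2:ℝ)^k) (2^(k+1))) :=
    hf_int.mono_set hsub
  have hmono : (2:ℝ)^k ≤ 2^(k+1) := by gcongr <;> norm_num
  have hstep3 : c / ((k+1) * Real.log 2) * 2^k ≤
      ∫ x in Set.Ioc ((2:ℝ)^k) (2^(k+1)), f x / Real.log x := by
    have hμ : (volume (Set.Ioc ((2:ℝ)^k) (2^(k+1)))).toReal = 2^k := by
      rw [Real.volume_Ioc, ENNReal.toReal_ofReal (by linarith)]
      ring
    have key := MeasureTheory.setIntegral_ge_of_const_le (μ := volume)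
      (c := c / ((k+1) * Real.log 2)) (s := Set.Ioc ((2:ℝ)^k) (2^(k+1)))
      (f := fun x => f x / Real.log x)
      measurableSet_Ioc (by simp) ?_ hint
    · rw [MeasureTheory.measureReal_def, hμ, smul_eq_mul] at key
      linarith
    · intro x hx
      have hx2 : (2:ℝ) ≤ x := hsub hx |>.out
      have hlx : 0 < Real.log x := Real.log_pos (by linarith)
      have hfx : c ≤ f x := hf_anti (Set.mem_Ici.2 hx2) h2k1 hx.2
      have hlxle : Real.log x ≤ (k+1) * Real.log 2 := by
        calc Real.log x ≤ Real.log (2^(k+1)) := Real.log_le_log (by linarith) hx.2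
        _ = (k+1) * Real.log 2 := by rw [Real.log_pow]; push_cast; ring
      calc c / ((k+1) * Real.log 2) ≤ c / Real.log x :=
            div_le_div_of_nonneg_left hc0 hlx hlxle
      _ ≤ f x / Real.log x := by gcongr
  -- combine
  have hk1 : (0:ℝ) < (k:ℝ) + 1 := by positivity
  calc ∑ p ∈ B, (f p : ℝ) ≤ B.card * c := hstep1
  _ ≤ (2^(k+3) / (k+1)) * c := by gcongr
  _ = 8 * Real.log 2 * (c / ((k+1) * Real.log 2) * 2^k) := by
      field_simp
      ring
  _ ≤ 8 * Real.log 2 * ∫ x in Set.Ioc ((2:ℝ)^k) (2^(k+1)), f x / Real.log x := by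
      have h8 : (0:ℝ) ≤ 8 * Real.log 2 := by positivity
      exact mul_le_mul_of_nonneg_left hstep3 h8

/-- If `f : ℝ → ℝ` is nonnegative and nonincreasing on `[2,∞)` and
`x ↦ f x / ln x` is integrable on `[2,∞)`, then `∑_{p prime} f p` converges. -/
theorem prime_sum_summable_of_integrable (f : ℝ → ℝ)
    (hf_nonneg : ∀ x ∈ Set.Ici (2 : ℝ), 0 ≤ f x)
    (hf_anti : AntitoneOn f (Set.Ici (2 : ℝ)))
    (hf_int : MeasureTheory.IntegrableOn (fun x => f x / Real.log x) (Set.Ici (2 : ℝ))) :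
    Summable (fun p : Nat.Primes => f ((p : ℕ) : ℝ)) := by
  classical
  have hfn : ∀ n : ℕ, 2 ≤ n → 0 ≤ f n := by
    intro n hn
    exact hf_nonneg _ (Set.mem_Ici.2 (by exact_mod_cast hn))
  -- nonnegativity of the integrand a.e. on Ici 2
  have hnn_ae : 0 ≤ᵐ[MeasureTheory.volume.restrict (Set.Ici (2:ℝ))]
      fun x => f x / Real.log x := by
    refine MeasureTheory.ae_restrict_of_forall_mem measurableSet_Ici ?_
    intro x hx
    have hx2 : (2:ℝ) ≤ x := hx
    exact div_nonneg (hf_nonneg x hx) (Real.log_nonneg (by linarith))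
  set I : ℝ := ∫ x in Set.Ici (2:ℝ), f x / Real.log x with hI
  set C : ℝ := f 2 + f 3 + 8 * Real.log 2 * I with hC
  set g : ℕ → ℝ := fun n => if n.Prime then f n else 0 with hg
  have hg_nonneg : ∀ n, 0 ≤ g n := by
    intro n
    simp only [hg]
    split
    · next h => exact hfn n h.two_le
    · exact le_rfl
  -- blocks
  set B : ℕ → Finset ℕ := fun k => (Finset.Ioc (2^(k+1)) (2^(k+2))).filter Nat.Prime with hBdef
  have hBmem : ∀ k, ∀ p ∈ B k, 2^(k+1) < p ∧ p ≤ 2^(k+2) ∧ p.Prime := by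
    intro k p hp
    have h := Finset.mem_filter.1 hp
    have h2 := Finset.mem_Ioc.1 h.1
    exact ⟨h2.1, h2.2, h.2⟩
  have hBdisj : ∀ a b : ℕ, a ≠ b → Disjoint (B a) (B b) := by
    have key : ∀ a b : ℕ, a < b → Disjoint (B a) (B b) := by
      intro a b hab
      rw [Finset.disjoint_left]
      intro p hpa hpb
      obtain ⟨_, h2, _⟩ := hBmem a p hpa
      obtain ⟨h3, _, _⟩ := hBmem b p hpb
      have : (2:ℕ)^(a+2) ≤ 2^(b+1) := Nat.pow_le_pow_right (by norm_num) (by omega)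
      omega
    intro a b hab
    rcases lt_or_gt_of_ne hab with h | h
    · exact key a b h
    · exact (key b a h).symm
  -- partial sum bound
  have hbound : ∀ N : ℕ, ∑ n ∈ Finset.range N, g n ≤ C := by
    intro N
    have hsum_filter : ∑ n ∈ Finset.range N, g n
        = ∑ n ∈ (Finset.range N).filter Nat.Prime, f n := by
      rw [Finset.sum_filter]
    rw [hsum_filter]
    set T : Finset ℕ := insert 2 (insert 3 ((Finset.Icc 1 N).biUnion B)) with hT
    have hsubset : (Finset.range N).filter Nat.Prime ⊆ T := by
      intro p hp
      obtain ⟨hpN, hpp⟩ := Finset.mem_filter.1 hp |>.imp Finset.mem_range.1 id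
      by_cases hple : p ≤ 4
      · have hp23 : p = 2 ∨ p = 3 := by
          have h2le := hpp.two_le
          interval_cases p
          · exact Or.inl rfl
          · exact Or.inr rfl
          · exact absurd hpp (by decide)
        rcases hp23 with rfl | rfl
        · exact Finset.mem_insert_self _ _
        · exact Finset.mem_insert_of_mem (Finset.mem_insert_self _ _)
      · push_neg at hple
        set m := Nat.log 2 p with hm
        have hp0 : p ≠ 0 := hpp.pos.ne'
        have h1 : 2^m ≤ p := Nat.pow_log_le_self 2 hp0
        have h2 : p < 2^(m+1) := Nat.lt_pow_succ_log_self (by norm_num) p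
        have hm2 : 2 ≤ m := by
          by_contra hcon
          push_neg at hcon
          interval_cases m <;> omega
        -- p is not a power of 2
        have hne : 2^m ≠ p := by
          intro he
          have : 2 ∣ p := he ▸ dvd_pow_self 2 (by omega)
          have := (Nat.Prime.eq_one_or_self_of_dvd hpp 2 this)
          omega
        have hk1 : 1 ≤ m - 1 := by omega
        have hkN : m - 1 ≤ N := by
          have : m ≤ p := Nat.log_le_self 2 p
          omega
        have hmem : p ∈ B (m-1) := by
          rw [hBdef]
          refine Finset.mem_filter.2 ⟨Finset.mem_Ioc.2 ⟨?_, ?_⟩, hpp⟩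
          · have : m - 1 + 1 = m := by omega
            rw [this]; omega
          · have : m - 1 + 2 = m + 1 := by omega
            rw [this]; omega
        rw [hT]
        apply Finset.mem_insert_of_mem
        apply Finset.mem_insert_of_mem
        exact Finset.mem_biUnion.2 ⟨m-1, Finset.mem_Icc.2 ⟨hk1, hkN⟩, hmem⟩
    have hTnonneg : ∀ n ∈ T, 0 ≤ f n := by
      intro n hn
      rw [hT] at hn
      rcases Finset.mem_insert.1 hn with rfl | hn
      · exact hfn 2 le_rfl
      rcases Finset.mem_insert.1 hn with rfl | hn
      · exact hfn 3 (by norm_num)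
      obtain ⟨k, _, hk⟩ := Finset.mem_biUnion.1 hn
      have := (hBmem k n hk).1
      have h2 : (2:ℕ) ≤ 2^(k+1) := by
        calc (2:ℕ) = 2^1 := rfl
        _ ≤ 2^(k+1) := Nat.pow_le_pow_right (by norm_num) (by omega)
      exact hfn n (by omega)
    have hle1 : ∑ n ∈ (Finset.range N).filter Nat.Prime, f n ≤ ∑ n ∈ T, f n :=
      Finset.sum_le_sum_of_subset_of_nonneg hsubset (fun i hi _ => hTnonneg i hi)
    -- evaluate sum over T
    have h2notin : (2:ℕ) ∉ insert 3 ((Finset.Icc 1 N).biUnion B) := by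
      simp only [Finset.mem_insert, Finset.mem_biUnion, not_or, not_exists]
      refine ⟨by norm_num, ?_⟩
      intro k hk
      obtain ⟨_, hmem⟩ := hk
      have := (hBmem k 2 hmem).1
      have h2 : (2:ℕ) ≤ 2^(k+1) := by
        calc (2:ℕ) = 2^1 := rfl
        _ ≤ 2^(k+1) := Nat.pow_le_pow_right (by norm_num) (by omega)
      omega
    have h3notin : (3:ℕ) ∉ (Finset.Icc 1 N).biUnion B := by
      simp only [Finset.mem_biUnion, not_exists]
      intro k hk
      obtain ⟨hkI, hmem⟩ := hk
      have := (hBmem k 3 hmem).1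
      have hk1 : 1 ≤ k := (Finset.mem_Icc.1 hkI).1
      have h2 : (4:ℕ) ≤ 2^(k+1) := by
        calc (4:ℕ) = 2^2 := rfl
        _ ≤ 2^(k+1) := Nat.pow_le_pow_right (by norm_num) (by omega)
      omega
    have hTeval : ∑ n ∈ T, f n
        = f 2 + f 3 + ∑ k ∈ Finset.Icc 1 N, ∑ p ∈ B k, f p := by
      rw [hT, Finset.sum_insert h2notin, Finset.sum_insert h3notin,
        Finset.sum_biUnion (fun a _ b _ hab => hBdisj a b hab)]
      push_cast
      ring
    -- bound the block sums by integrals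
    set J : ℕ → Set ℝ := fun k => Set.Ioc ((2:ℝ)^k) (2^(k+1)) with hJ
    have hJsub : ∀ k ∈ Finset.Icc 1 N, J k ⊆ Set.Ici (2:ℝ) := by
      intro k hk x hx
      have hk1 : 1 ≤ k := (Finset.mem_Icc.1 hk).1
      have : (2:ℝ) ≤ 2^k := le_self_pow₀ one_le_two (by omega)
      exact le_trans this hx.1.le
    have hblocks : ∑ k ∈ Finset.Icc 1 N, ∑ p ∈ B k, f p
        ≤ 8 * Real.log 2 * ∑ k ∈ Finset.Icc 1 N, ∫ x in J k, f x / Real.log x := by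
      rw [Finset.mul_sum]
      apply Finset.sum_le_sum
      intro k hk
      exact block_bound f hf_nonneg hf_anti hf_int count_primes_block' k (Finset.mem_Icc.1 hk).1
    have hJint : ∑ k ∈ Finset.Icc 1 N, ∫ x in J k, f x / Real.log x ≤ I := by
      have hmeas : ∀ k ∈ Finset.Icc 1 N, MeasurableSet (J k) := fun k _ => measurableSet_Ioc
      have hpair : Set.Pairwise ↑(Finset.Icc 1 N) (Function.onFun Disjoint J) := by
        have key : ∀ a b : ℕ, a < b → Disjoint (J a) (J b) := by
          intro a b hab
          rw [Set.disjoint_left]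
          intro x hxa hxb
          have h1 : (2:ℝ)^(a+1) ≤ 2^b := by
            apply pow_le_pow_right₀ one_le_two; omega
          exact absurd (hxa.2.trans h1) (not_le.2 hxb.1)
        intro a ha b hb hab
        rcases lt_or_gt_of_ne hab with h | h
        · exact key a b h
        · exact (key b a h).symm
      have hintk : ∀ k ∈ Finset.Icc 1 N,
          MeasureTheory.IntegrableOn (fun x => f x / Real.log x) (J k) :=
        fun k hk => hf_int.mono_set (hJsub k hk)
      rw [← MeasureTheory.integral_biUnion_finset (Finset.Icc 1 N) hmeas hpair hintk]
      apply MeasureTheory.setIntegral_mono_set hf_int hnn_ae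
      refine HasSubset.Subset.eventuallyLE ?_
      intro x hx
      simp only [Set.mem_iUnion] at hx
      obtain ⟨k, hk, hxk⟩ := hx
      exact hJsub k hk hxk
    have hlog2 : (0:ℝ) ≤ 8 * Real.log 2 := by positivity
    calc ∑ n ∈ (Finset.range N).filter Nat.Prime, f n ≤ ∑ n ∈ T, f n := hle1
    _ = f 2 + f 3 + ∑ k ∈ Finset.Icc 1 N, ∑ p ∈ B k, f p := hTeval
    _ ≤ f 2 + f 3 + 8 * Real.log 2 * ∑ k ∈ Finset.Icc 1 N, ∫ x in J k, f x / Real.log x := by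
        linarith
    _ ≤ C := by
        rw [hC]
        have := mul_le_mul_of_nonneg_left hJint hlog2
        linarith
  have hgsum : Summable g := summable_of_sum_range_le hg_nonneg hbound
  have : Summable (Set.indicator {n : ℕ | n.Prime} (fun n : ℕ => f n)) := by
    convert hgsum using 1
    ext n
    simp [Set.indicator_apply, hg]
  exact summable_subtype_iff_indicator.2 this
end

section
/- Let α, β be real numbers with β > 0 and 1 < α ≤ β + 1. Then the function V_{α,β}(t) = ∑_{p prime} p^{−α} cos(2π p^β t) is Hölder continuous on [0,1): there exist a constant C > 0 and an exponent s ∈ (0,1] such that |V_{α,β}(t) − V_{α,β}(t₀)| ≤ C·|t − t₀|^s for all t, t₀ ∈ [0,1). -/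
set_option maxHeartbeats 1000000

open Real

private lemma cos_diff_bound (a b : ℝ) : |Real.cos a - Real.cos b| ≤ min 2 |a - b| := by
  have h1 : |Real.cos a - Real.cos b| ≤ 2 := by
    have := Real.neg_one_le_cos a
    have := Real.cos_le_one a
    have := Real.neg_one_le_cos b
    have := Real.cos_le_one b
    rw [abs_le]; constructor <;> linarith
  have h2 : |Real.cos a - Real.cos b| ≤ |a - b| := by
    rw [Real.cos_sub_cos]
    have hs1 : |Real.sin ((a + b) / 2)| ≤ 1 :=
      abs_le.mpr ⟨Real.neg_one_le_sin _, Real.sin_le_one _⟩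
    have hs2 : |Real.sin ((a - b) / 2)| ≤ |(a - b) / 2| := Real.abs_sin_le_abs
    calc |(-2) * Real.sin ((a + b) / 2) * Real.sin ((a - b) / 2)|
        = 2 * |Real.sin ((a + b) / 2)| * |Real.sin ((a - b) / 2)| := by
          rw [abs_mul, abs_mul]; norm_num
      _ ≤ 2 * 1 * |(a - b) / 2| := by
          apply mul_le_mul _ hs2 (abs_nonneg _) (by norm_num)
          exact mul_le_mul_of_nonneg_left hs1 (by norm_num)
      _ = |a - b| := by rw [abs_div, abs_two]; ring
  exact le_min h1 h2


private lemma tsum_abs_sub_le {f g bnd : Nat.Primes → ℝ} (hf : Summable f) (hg : Summable g)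
    (hb : Summable bnd) (hkey : ∀ p, |f p - g p| ≤ bnd p) :
    |(∑' p, f p) - ∑' p, g p| ≤ ∑' p, bnd p := by
  rw [← Summable.tsum_sub hf hg]
  have habs : Summable (fun p => |f p - g p|) :=
    Summable.of_nonneg_of_le (fun p => abs_nonneg _) hkey hb
  have hn : Summable (fun p => ‖f p - g p‖) := by simpa [Real.norm_eq_abs] using habs
  calc |∑' p, (f p - g p)| = ‖∑' p, (f p - g p)‖ := (Real.norm_eq_abs _).symm
    _ ≤ ∑' p, ‖f p - g p‖ := norm_tsum_le_tsum_norm hn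
    _ = ∑' p, |f p - g p| := by simp [Real.norm_eq_abs]
    _ ≤ ∑' p, bnd p := Summable.tsum_le_tsum hkey habs hb

/-- For `β > 0` and `1 < α ≤ β + 1`, the function
`V_{α,β}(t) = ∑_{p prime} p^{-α} cos(2π p^β t)` is Hölder continuous on `[0,1)`:
there are `C > 0` and `s ∈ (0,1]` with `|V(t) - V(t₀)| ≤ C |t - t₀|^s` for `t, t₀ ∈ [0,1)`. -/
theorem prime_power_cos_series_holder (α β : ℝ) (hβ : 0 < β) (hα : 1 < α) (hαβ : α ≤ β + 1) :
    ∃ C > (0 : ℝ), ∃ s ∈ Set.Ioc (0 : ℝ) 1,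
      ∀ t ∈ Set.Ico (0 : ℝ) 1, ∀ t₀ ∈ Set.Ico (0 : ℝ) 1,
        |(∑' p : Nat.Primes,
            ((p : ℕ) : ℝ) ^ (-α) * Real.cos (2 * Real.pi * ((p : ℕ) : ℝ) ^ β * t)) -
          (∑' p : Nat.Primes,
            ((p : ℕ) : ℝ) ^ (-α) * Real.cos (2 * Real.pi * ((p : ℕ) : ℝ) ^ β * t₀))| ≤
          C * |t - t₀| ^ s := by
  obtain ⟨s, hs_def⟩ : ∃ s : ℝ, s = (α - 1) / (2 * β) := ⟨_, rfl⟩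
  have hs0 : 0 < s := hs_def ▸ div_pos (by linarith) (by linarith)
  have hs1 : s ≤ 1 := by
    rw [hs_def, div_le_one (by linarith)]; linarith
  -- summable majorant
  have hexp : -((α + 1) / 2) < -1 := by linarith
  have hS : Summable (fun p : Nat.Primes => ((p : ℕ) : ℝ) ^ (-((α + 1) / 2))) :=
    Nat.Primes.summable_rpow.mpr hexp
  have hSnn : ∀ p : Nat.Primes, 0 ≤ ((p : ℕ) : ℝ) ^ (-((α + 1) / 2)) := fun p =>
    Real.rpow_nonneg (by positivity) _
  obtain ⟨S, hS_def⟩ : ∃ S : ℝ, S = ∑' p : Nat.Primes, ((p : ℕ) : ℝ) ^ (-((α + 1) / 2)) :=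
    ⟨_, rfl⟩
  have hS0 : 0 ≤ S := hS_def ▸ tsum_nonneg hSnn
  refine ⟨2 * Real.pi * S + 1, by positivity, s, ⟨hs0, hs1⟩, ?_⟩
  intro t ht t₀ ht₀
  obtain ⟨h, hh_def⟩ : ∃ h : ℝ, h = |t - t₀| := ⟨_, rfl⟩
  have hh0 : 0 ≤ h := hh_def ▸ abs_nonneg _
  have hh1 : h ≤ 1 := by
    rw [hh_def, abs_le]
    obtain ⟨h1, h2⟩ := ht; obtain ⟨h3, h4⟩ := ht₀
    constructor <;> linarith
  -- pointwise properties
  have hppos : ∀ p : Nat.Primes, (0 : ℝ) < ((p : ℕ) : ℝ) := fun p => by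
    exact_mod_cast p.prop.pos
  -- summability of both series
  have hsum : ∀ u : ℝ, Summable (fun p : Nat.Primes =>
      ((p : ℕ) : ℝ) ^ (-α) * Real.cos (2 * Real.pi * ((p : ℕ) : ℝ) ^ β * u)) := by
    intro u
    have hα' : Summable (fun p : Nat.Primes => ((p : ℕ) : ℝ) ^ (-α)) :=
      Nat.Primes.summable_rpow.mpr (by linarith)
    apply Summable.of_norm
    apply hα'.of_nonneg_of_le (fun p => norm_nonneg _)
    intro p
    rw [Real.norm_eq_abs, abs_mul, abs_of_nonneg (Real.rpow_nonneg (hppos p).le _)]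
    calc ((p : ℕ) : ℝ) ^ (-α) * |Real.cos (2 * Real.pi * ((p : ℕ) : ℝ) ^ β * u)|
        ≤ ((p : ℕ) : ℝ) ^ (-α) * 1 :=
          mul_le_mul_of_nonneg_left (Real.abs_cos_le_one _) (Real.rpow_nonneg (hppos p).le _)
      _ = ((p : ℕ) : ℝ) ^ (-α) := mul_one _
  -- key termwise bound
  have key : ∀ p : Nat.Primes,
      |((p : ℕ) : ℝ) ^ (-α) * Real.cos (2 * Real.pi * ((p : ℕ) : ℝ) ^ β * t) -
       ((p : ℕ) : ℝ) ^ (-α) * Real.cos (2 * Real.pi * ((p : ℕ) : ℝ) ^ β * t₀)| ≤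
      2 * Real.pi * ((p : ℕ) : ℝ) ^ (-((α + 1) / 2)) * h ^ s := by
    intro p
    set P : ℝ := ((p : ℕ) : ℝ) with hP_def
    have hP : (0 : ℝ) < P := hppos p
    have hcos := cos_diff_bound (2 * Real.pi * P ^ β * t) (2 * Real.pi * P ^ β * t₀)
    have hdiff : |2 * Real.pi * P ^ β * t - 2 * Real.pi * P ^ β * t₀|
        = 2 * Real.pi * (P ^ β * h) := by
      rw [show 2 * Real.pi * P ^ β * t - 2 * Real.pi * P ^ β * t₀
          = 2 * Real.pi * P ^ β * (t - t₀) by ring, abs_mul]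
      rw [abs_of_nonneg (by positivity : (0:ℝ) ≤ 2 * Real.pi * P ^ β)]
      rw [hh_def]; ring
    have hmin : min 2 (2 * Real.pi * (P ^ β * h)) ≤ 2 * Real.pi * (P ^ β * h) ^ s := by
      rcases le_or_gt (P ^ β * h) 1 with hx | hx
      · rcases eq_or_lt_of_le (mul_nonneg (Real.rpow_nonneg hP.le _) hh0) with hx0 | hx0
        · rw [← hx0]; simp [Real.zero_rpow (ne_of_gt hs0)]
        · have : P ^ β * h ≤ (P ^ β * h) ^ s := by
            nth_rewrite 1 [← Real.rpow_one (P ^ β * h)]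
            exact Real.rpow_le_rpow_of_exponent_ge hx0 hx hs1
          refine min_le_of_right_le ?_
          exact mul_le_mul_of_nonneg_left this (by positivity)
      · have h1x : (1 : ℝ) ≤ (P ^ β * h) ^ s :=
          Real.one_le_rpow hx.le hs0.le
        refine min_le_of_left_le ?_
        nlinarith [Real.pi_gt_three]
    calc |P ^ (-α) * Real.cos (2 * Real.pi * P ^ β * t) -
          P ^ (-α) * Real.cos (2 * Real.pi * P ^ β * t₀)|
        = P ^ (-α) * |Real.cos (2 * Real.pi * P ^ β * t) -
            Real.cos (2 * Real.pi * P ^ β * t₀)| := by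
          rw [← mul_sub, abs_mul, abs_of_nonneg (Real.rpow_nonneg hP.le _)]
      _ ≤ P ^ (-α) * (2 * Real.pi * (P ^ β * h) ^ s) := by
          apply mul_le_mul_of_nonneg_left _ (Real.rpow_nonneg hP.le _)
          calc |Real.cos (2 * Real.pi * P ^ β * t) - Real.cos (2 * Real.pi * P ^ β * t₀)|
              ≤ min 2 (2 * Real.pi * (P ^ β * h)) := by rw [← hdiff]; exact hcos
            _ ≤ 2 * Real.pi * (P ^ β * h) ^ s := hmin
      _ = 2 * Real.pi * P ^ (-((α + 1) / 2)) * h ^ s := by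
          rw [Real.mul_rpow (Real.rpow_nonneg hP.le _) hh0,
            ← Real.rpow_mul hP.le β s,
            show β * s = (α - 1) / 2 by rw [hs_def]; field_simp,
            show P ^ (-α) * (2 * Real.pi * (P ^ ((α - 1) / 2) * h ^ s))
                = 2 * Real.pi * (P ^ (-α) * P ^ ((α - 1) / 2)) * h ^ s by ring,
            ← Real.rpow_add hP,
            show -α + (α - 1) / 2 = -((α + 1) / 2) by ring]
  have hfsum := hsum t
  have hgsum := hsum t₀
  have hbnd : Summable (fun p : Nat.Primes =>
      2 * Real.pi * ((p : ℕ) : ℝ) ^ (-((α + 1) / 2)) * h ^ s) :=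
    (hS.mul_left (2 * Real.pi)).mul_right (h ^ s)
  rw [← hh_def]
  calc |(∑' p : Nat.Primes,
          ((p : ℕ) : ℝ) ^ (-α) * Real.cos (2 * Real.pi * ((p : ℕ) : ℝ) ^ β * t)) -
        ∑' p : Nat.Primes,
          ((p : ℕ) : ℝ) ^ (-α) * Real.cos (2 * Real.pi * ((p : ℕ) : ℝ) ^ β * t₀)|
      ≤ ∑' p : Nat.Primes, 2 * Real.pi * ((p : ℕ) : ℝ) ^ (-((α + 1) / 2)) * h ^ s :=
        tsum_abs_sub_le hfsum hgsum hbnd key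
    _ = 2 * Real.pi * S * h ^ s := by
        rw [hS_def, tsum_mul_right, tsum_mul_left]
    _ ≤ (2 * Real.pi * S + 1) * h ^ s := by
        apply mul_le_mul_of_nonneg_right (by linarith) (Real.rpow_nonneg hh0 _)
end

section
/- Let q be a prime number and let l ∈ {1, …, q−1}. Then ∑_{p ≤ n, p prime, p ≡ l (mod q)} 1/p is asymptotically (1/(q−1))·ln ln n; that is, the ratio (∑_{p ≤ n, p ≡ l mod q} 1/p) / (ln ln n) tends to 1/(q−1) as n → ∞. -/
set_option maxHeartbeats 1000000
open Filter Real Finset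

/-- Weighted Cesàro: if `x i → c` and the nonnegative weights `b` have divergent partial
sums, then the weighted averages tend to `c`. -/
lemma weighted_cesaro {b x : ℕ → ℝ} {c : ℝ} (hb : ∀ i, 0 ≤ b i)
    (hx : Tendsto x atTop (nhds c))
    (hB : Tendsto (fun N => ∑ i ∈ range N, b i) atTop atTop) :
    Tendsto (fun N => (∑ i ∈ range N, b i * x i) / (∑ i ∈ range N, b i)) atTop (nhds c) := by
  rw [Metric.tendsto_atTop]
  intro ε hε
  obtain ⟨M, hM⟩ := (Metric.tendsto_atTop.mp hx) (ε / 3) (by positivity)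
  set K : ℝ := ∑ i ∈ range M, b i * |x i - c| with hK
  have hK0 : 0 ≤ K := Finset.sum_nonneg fun i _ => mul_nonneg (hb i) (abs_nonneg _)
  -- eventually B N large
  obtain ⟨N₀, hN₀⟩ := eventually_atTop.mp (hB.eventually_ge_atTop (max 1 (K * 3 / ε)))
  refine ⟨max N₀ M, fun N hN => ?_⟩
  have hNM : M ≤ N := le_trans (le_max_right _ _) hN
  have hBN := hN₀ N (le_trans (le_max_left _ _) hN)
  have hBpos : (0:ℝ) < ∑ i ∈ range N, b i := lt_of_lt_of_le one_pos (le_trans (le_max_left _ _) hBN)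
  have key : |∑ i ∈ range N, b i * x i - (∑ i ∈ range N, b i) * c| ≤ K + ε / 3 * ∑ i ∈ range N, b i := by
    have h1 : ∑ i ∈ range N, b i * x i - (∑ i ∈ range N, b i) * c
        = ∑ i ∈ range N, b i * (x i - c) := by
      rw [Finset.sum_mul, ← Finset.sum_sub_distrib]; congr 1; ext i; ring
    rw [h1]
    calc |∑ i ∈ range N, b i * (x i - c)| ≤ ∑ i ∈ range N, |b i * (x i - c)| :=
          Finset.abs_sum_le_sum_abs _ _
      _ = ∑ i ∈ range N, b i * |x i - c| := by
          refine Finset.sum_congr rfl fun i _ => ?_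
          rw [abs_mul, abs_of_nonneg (hb i)]
      _ ≤ K + ε / 3 * ∑ i ∈ range N, b i := by
          rw [← Finset.sum_range_add_sum_Ico (fun i => b i * |x i - c|) hNM, hK]
          have h2 : ∑ i ∈ Ico M N, b i * |x i - c| ≤ ε / 3 * ∑ i ∈ Ico M N, b i := by
            rw [Finset.mul_sum]
            refine Finset.sum_le_sum fun i hi => ?_
            have := (hM i (Finset.mem_Ico.mp hi).1).le
            rw [mul_comm (ε/3)]
            exact mul_le_mul_of_nonneg_left (by rwa [Real.dist_eq] at this) (hb i)
          have h4 : ∑ i ∈ Ico M N, b i ≤ ∑ i ∈ range N, b i := by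
            rw [← Finset.sum_range_add_sum_Ico (fun i => b i) hNM]
            have : (0:ℝ) ≤ ∑ i ∈ range M, b i := Finset.sum_nonneg fun i _ => hb i
            linarith
          have h5 := mul_le_mul_of_nonneg_left h4 (le_of_lt (by positivity : (0:ℝ) < ε/3))
          linarith
  have hKB : K ≤ ε / 3 * ∑ i ∈ range N, b i := by
    have : K * 3 / ε ≤ ∑ i ∈ range N, b i := le_trans (le_max_right _ _) hBN
    rw [div_le_iff₀ hε] at this
    nlinarith
  rw [Real.dist_eq]
  have heq : (∑ i ∈ range N, b i * x i) / (∑ i ∈ range N, b i) - c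
      = (∑ i ∈ range N, b i * x i - (∑ i ∈ range N, b i) * c) / (∑ i ∈ range N, b i) := by
    field_simp
  rw [heq, abs_div, abs_of_pos hBpos, div_lt_iff₀ hBpos]
  calc |∑ i ∈ range N, b i * x i - (∑ i ∈ range N, b i) * c| ≤ K + ε/3 * ∑ i ∈ range N, b i := key
    _ ≤ ε/3 * ∑ i ∈ range N, b i + ε/3 * ∑ i ∈ range N, b i := by linarith
    _ < ε * ∑ i ∈ range N, b i := by nlinarith

open Filter Real Finset intervalIntegral

noncomputable def gK (s : ℝ) : ℝ := if Real.exp (-1) ≤ s then s⁻¹ else 0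

lemma clamp_cont : Continuous (fun r : ℝ => max 0 (min 1 r)) :=
  continuous_const.max (continuous_const.min continuous_id)

lemma clamp_nonpos {r : ℝ} (hr : r ≤ 0) : max 0 (min 1 r) = 0 :=
  max_eq_left (le_trans (min_le_right _ _) hr)

lemma clamp_le_one (r : ℝ) : max 0 (min 1 r) ≤ 1 :=
  max_le zero_le_one (min_le_left _ _)

lemma clamp_eq_one {r : ℝ} (hr : 1 ≤ r) : max 0 (min 1 r) = 1 := by
  rw [min_eq_left hr, max_eq_right zero_le_one]

lemma aux_contOn {r₀ δ : ℝ} (hr₀ : 0 < r₀) (hδ : 0 < δ) :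
    ContinuousOn (fun s : ℝ => s⁻¹ * max 0 (min 1 ((s - r₀)/δ))) (Set.Icc 0 1) := by
  intro s hs
  rcases eq_or_lt_of_le hs.1 with h0 | h0
  · refine ContinuousAt.continuousWithinAt ?_
    have hev : (fun x : ℝ => x⁻¹ * max 0 (min 1 ((x - r₀)/δ))) =ᶠ[nhds s] fun _ => (0:ℝ) := by
      have hmem : s < r₀ := by rw [← h0]; exact hr₀
      filter_upwards [Iio_mem_nhds hmem] with x hx
      have hx' : x < r₀ := hx
      rw [clamp_nonpos (div_nonpos_of_nonpos_of_nonneg (by linarith) hδ.le), mul_zero]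
    exact hev.continuousAt
  · refine ContinuousAt.continuousWithinAt ?_
    exact (continuousAt_inv₀ h0.ne').mul
      ((clamp_cont.comp ((continuous_id.sub continuous_const).div_const δ)).continuousAt)

lemma exists_poly_sandwich {ε : ℝ} (hε : 0 < ε) :
    ∃ P₁ P₂ : Polynomial ℝ,
      (∀ s ∈ Set.Icc (0:ℝ) 1, P₁.eval s ≤ gK s) ∧
      (∀ s ∈ Set.Icc (0:ℝ) 1, gK s ≤ P₂.eval s) ∧
      1 - ε ≤ (∫ s in (0:ℝ)..1, P₁.eval s) ∧ (∫ s in (0:ℝ)..1, P₂.eval s) ≤ 1 + ε := by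
  set β : ℝ := Real.exp (-1) with hβ
  have hβ0 : 0 < β := Real.exp_pos _
  have hβhalf : β ≤ 1/2 := by
    rw [hβ, Real.exp_neg]
    rw [inv_le_comm₀ (Real.exp_pos 1) (by norm_num)]
    calc (1/2 : ℝ)⁻¹ = 2 := by norm_num
      _ ≤ Real.exp 1 := by have := Real.add_one_le_exp 1; linarith
  set δ : ℝ := β * min (1/2) (ε/6) with hδdef
  have hδ0 : 0 < δ := by
    apply mul_pos hβ0; positivity
  have hδβ2 : δ ≤ β/2 := by
    rw [hδdef]
    calc β * min (1/2) (ε/6) ≤ β * (1/2) := by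
          apply mul_le_mul_of_nonneg_left (min_le_left _ _) hβ0.le
      _ = β/2 := by ring
  have hδε : δ ≤ β * ε / 6 := by
    rw [hδdef]
    calc β * min (1/2) (ε/6) ≤ β * (ε/6) := by
          apply mul_le_mul_of_nonneg_left (min_le_right _ _) hβ0.le
      _ = β * ε / 6 := by ring
  have hβδ0 : 0 < β - δ := by linarith
  have hβδ1 : β + δ ≤ 1 := by linarith
  have hβ1 : β - δ < 1 := by linarith
  -- the two continuous sandwich functions
  set H : ℝ → ℝ := fun s => s⁻¹ * max 0 (min 1 ((s - (β - δ))/δ)) with hH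
  set h : ℝ → ℝ := fun s => s⁻¹ * max 0 (min 1 ((s - β)/δ)) with hh
  have hHcont : ContinuousOn H (Set.Icc 0 1) := aux_contOn hβδ0 hδ0
  have hhcont : ContinuousOn h (Set.Icc 0 1) := aux_contOn hβ0 hδ0
  have hHnonneg : ∀ s ∈ Set.Icc (0:ℝ) 1, 0 ≤ H s := fun s hs =>
    mul_nonneg (inv_nonneg.mpr hs.1) (le_max_left _ _)
  have hhnonneg : ∀ s ∈ Set.Icc (0:ℝ) 1, 0 ≤ h s := fun s hs =>
    mul_nonneg (inv_nonneg.mpr hs.1) (le_max_left _ _)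
  -- g ≤ H and h ≤ g on Icc 0 1
  have hgH : ∀ s ∈ Set.Icc (0:ℝ) 1, gK s ≤ H s := by
    intro s hs
    simp only [gK]
    split_ifs with hcase
    · have h1 : (1:ℝ) ≤ (s - (β - δ))/δ := by rw [le_div_iff₀ hδ0]; linarith
      show s⁻¹ ≤ s⁻¹ * max 0 (min 1 ((s - (β - δ))/δ))
      rw [clamp_eq_one h1, mul_one]
    · exact hHnonneg s hs
  have hhg : ∀ s ∈ Set.Icc (0:ℝ) 1, h s ≤ gK s := by
    intro s hs
    simp only [gK]
    split_ifs with hcase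
    · show s⁻¹ * max 0 (min 1 ((s - β)/δ)) ≤ s⁻¹
      have h2 := mul_le_mul_of_nonneg_left (clamp_le_one ((s - β)/δ)) (inv_nonneg.mpr hs.1)
      rwa [mul_one] at h2
    · push_neg at hcase
      show s⁻¹ * max 0 (min 1 ((s - β)/δ)) ≤ 0
      rw [clamp_nonpos (div_nonpos_of_nonpos_of_nonneg (by linarith) hδ0.le), mul_zero]
  -- integral bounds for H and h
  have hinvInt : ∀ a : ℝ, 0 < a → a ≤ 1 → IntervalIntegrable (fun s : ℝ => s⁻¹) MeasureTheory.volume a 1 := by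
    intro a ha ha1
    apply ContinuousOn.intervalIntegrable
    apply ContinuousOn.inv₀ continuousOn_id
    intro x hx
    rw [Set.uIcc_of_le ha1] at hx
    exact (lt_of_lt_of_le ha hx.1).ne'
  have hHint : IntervalIntegrable H MeasureTheory.volume 0 1 :=
    (hHcont.mono (by rw [Set.uIcc_of_le zero_le_one])).intervalIntegrable
  have hhint : IntervalIntegrable h MeasureTheory.volume 0 1 :=
    (hhcont.mono (by rw [Set.uIcc_of_le zero_le_one])).intervalIntegrable
  have hintH : (∫ s in (0:ℝ)..1, H s) ≤ 1 + ε/3 := by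
    have hsplit : (∫ s in (0:ℝ)..(β-δ), H s) + (∫ s in (β-δ)..1, H s) = ∫ s in (0:ℝ)..1, H s :=
      integral_add_adjacent_intervals
        (hHint.mono_set (by rw [Set.uIcc_of_le zero_le_one, Set.uIcc_of_le hβδ0.le]; exact Set.Icc_subset_Icc le_rfl (by linarith)))
        (hHint.mono_set (by rw [Set.uIcc_of_le zero_le_one, Set.uIcc_of_le hβ1.le]; exact Set.Icc_subset_Icc hβδ0.le le_rfl))
    have h1 : (∫ s in (0:ℝ)..(β-δ), H s) = 0 := by
      have : (∫ s in (0:ℝ)..(β-δ), H s) = ∫ s in (0:ℝ)..(β-δ), (0:ℝ) := by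
        apply intervalIntegral.integral_congr
        intro x hx
        rw [Set.uIcc_of_le hβδ0.le] at hx
        show x⁻¹ * max 0 (min 1 ((x - (β - δ))/δ)) = 0
        rw [clamp_nonpos (div_nonpos_of_nonpos_of_nonneg (by linarith [hx.2]) hδ0.le), mul_zero]
      rw [this, intervalIntegral.integral_zero]
    have h2 : (∫ s in (β-δ)..1, H s) ≤ ∫ s in (β-δ)..1, s⁻¹ := by
      apply integral_mono_on hβ1.le
        (hHint.mono_set (by rw [Set.uIcc_of_le zero_le_one, Set.uIcc_of_le hβ1.le]; exact Set.Icc_subset_Icc hβδ0.le le_rfl))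
        (hinvInt _ hβδ0 hβ1.le)
      intro x hx
      show x⁻¹ * max 0 (min 1 ((x - (β - δ))/δ)) ≤ x⁻¹
      have h5 := mul_le_mul_of_nonneg_left (clamp_le_one ((x - (β - δ))/δ))
        (inv_nonneg.mpr (le_trans hβδ0.le hx.1))
      rwa [mul_one] at h5
    have h3 : (∫ s in (β-δ)..1, s⁻¹) = -Real.log (β - δ) := by
      have : (∫ s in (β-δ)..1, s⁻¹) = ∫ s in (β-δ)..1, 1/s := by
        apply intervalIntegral.integral_congr; intro x _; rw [one_div]
      rw [this, integral_one_div (by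
        rw [Set.uIcc_of_le hβ1.le]
        intro hmem
        exact absurd hmem.1 (by linarith))]
      rw [one_div, Real.log_inv]
    have h4 : -Real.log (β - δ) ≤ 1 + ε/3 := by
      have hlog : Real.log (β/(β-δ)) ≤ β/(β-δ) - 1 := Real.log_le_sub_one_of_pos (by positivity)
      rw [Real.log_div hβ0.ne' hβδ0.ne'] at hlog
      have hlogβ : Real.log β = -1 := by rw [hβ, Real.log_exp]
      have hfrac : β/(β-δ) - 1 = δ/(β-δ) := by field_simp; ring
      have hfrac2 : δ/(β-δ) ≤ ε/3 := by
        rw [div_le_iff₀ hβδ0]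
        nlinarith [hδε, hδβ2, hβ0, hε.le]
      rw [hfrac] at hlog
      linarith
    linarith
  have hinth : 1 - ε/3 ≤ ∫ s in (0:ℝ)..1, h s := by
    have hsplit : (∫ s in (0:ℝ)..(β+δ), h s) + (∫ s in (β+δ)..1, h s) = ∫ s in (0:ℝ)..1, h s :=
      integral_add_adjacent_intervals
        (hhint.mono_set (by rw [Set.uIcc_of_le zero_le_one, Set.uIcc_of_le (by linarith : (0:ℝ) ≤ β + δ)]; exact Set.Icc_subset_Icc le_rfl hβδ1))
        (hhint.mono_set (by rw [Set.uIcc_of_le zero_le_one, Set.uIcc_of_le hβδ1]; exact Set.Icc_subset_Icc (by linarith) le_rfl))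
    have h1 : 0 ≤ ∫ s in (0:ℝ)..(β+δ), h s := by
      apply intervalIntegral.integral_nonneg (by linarith : (0:ℝ) ≤ β + δ)
      intro x hx
      exact mul_nonneg (inv_nonneg.mpr hx.1) (le_max_left _ _)
    have h2 : (∫ s in (β+δ)..1, h s) = ∫ s in (β+δ)..1, s⁻¹ := by
      apply intervalIntegral.integral_congr
      intro x hx
      rw [Set.uIcc_of_le hβδ1] at hx
      have harg : (1:ℝ) ≤ (x - β)/δ := by
        rw [le_div_iff₀ hδ0]; linarith [hx.1]
      show x⁻¹ * max 0 (min 1 ((x - β)/δ)) = x⁻¹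
      rw [clamp_eq_one harg, mul_one]
    have h3 : (∫ s in (β+δ)..1, s⁻¹) = -Real.log (β + δ) := by
      have : (∫ s in (β+δ)..1, s⁻¹) = ∫ s in (β+δ)..1, 1/s := by
        apply intervalIntegral.integral_congr; intro x _; rw [one_div]
      rw [this, integral_one_div (by
        rw [Set.uIcc_of_le hβδ1]
        intro hmem
        exact absurd hmem.1 (by linarith))]
      rw [one_div, Real.log_inv]
    have h4 : 1 - ε/3 ≤ -Real.log (β + δ) := by
      have hlog : Real.log ((β+δ)/β) ≤ (β+δ)/β - 1 := Real.log_le_sub_one_of_pos (by positivity)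
      rw [Real.log_div (by positivity) hβ0.ne'] at hlog
      have hlogβ : Real.log β = -1 := by rw [hβ, Real.log_exp]
      have hfrac : (β+δ)/β - 1 = δ/β := by field_simp; ring
      have hfrac2 : δ/β ≤ ε/3 := by
        rw [div_le_iff₀ hβ0]
        nlinarith [hδε, hε.le, hβ0]
      rw [hfrac] at hlog
      linarith
    linarith
  -- Weierstrass approximations
  obtain ⟨p₂, hp₂⟩ := exists_polynomial_near_of_continuousOn 0 1 H hHcont (ε/6) (by positivity)
  obtain ⟨p₁, hp₁⟩ := exists_polynomial_near_of_continuousOn 0 1 h hhcont (ε/6) (by positivity)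
  refine ⟨p₁ - Polynomial.C (ε/6), p₂ + Polynomial.C (ε/6), ?_, ?_, ?_, ?_⟩
  · intro s hs
    have := hp₁ s hs
    rw [abs_lt] at this
    simp only [Polynomial.eval_sub, Polynomial.eval_C]
    linarith [hhg s hs]
  · intro s hs
    have := hp₂ s hs
    rw [abs_lt] at this
    simp only [Polynomial.eval_add, Polynomial.eval_C]
    linarith [hgH s hs]
  · -- lower bound on ∫ P₁
    have hpoly : IntervalIntegrable (fun s => Polynomial.eval s p₁) MeasureTheory.volume 0 1 :=
      (p₁.continuous).intervalIntegrable _ _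
    have key : (∫ s in (0:ℝ)..1, h s) - ε/6 ≤ ∫ s in (0:ℝ)..1, Polynomial.eval s p₁ := by
      have : (∫ s in (0:ℝ)..1, (h s - ε/6)) ≤ ∫ s in (0:ℝ)..1, Polynomial.eval s p₁ := by
        apply integral_mono_on zero_le_one (hhint.sub (intervalIntegrable_const)) hpoly
        intro x hx
        have := hp₁ x hx
        rw [abs_lt] at this
        linarith
      rwa [intervalIntegral.integral_sub hhint intervalIntegrable_const,
        intervalIntegral.integral_const, smul_eq_mul, sub_zero, one_mul] at this
    have : (∫ s in (0:ℝ)..1, Polynomial.eval s (p₁ - Polynomial.C (ε/6)))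
        = (∫ s in (0:ℝ)..1, Polynomial.eval s p₁) - ε/6 := by
      simp only [Polynomial.eval_sub, Polynomial.eval_C]
      rw [intervalIntegral.integral_sub hpoly intervalIntegrable_const,
        intervalIntegral.integral_const, smul_eq_mul, sub_zero, one_mul]
    rw [this]
    linarith
  · -- upper bound on ∫ P₂
    have hpoly : IntervalIntegrable (fun s => Polynomial.eval s p₂) MeasureTheory.volume 0 1 :=
      (p₂.continuous).intervalIntegrable _ _
    have key : (∫ s in (0:ℝ)..1, Polynomial.eval s p₂) ≤ (∫ s in (0:ℝ)..1, H s) + ε/6 := by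
      have : (∫ s in (0:ℝ)..1, Polynomial.eval s p₂) ≤ ∫ s in (0:ℝ)..1, (H s + ε/6) := by
        apply integral_mono_on zero_le_one hpoly (hHint.add (intervalIntegrable_const))
        intro x hx
        have := hp₂ x hx
        rw [abs_lt] at this
        linarith
      rwa [intervalIntegral.integral_add hHint intervalIntegrable_const,
        intervalIntegral.integral_const, smul_eq_mul, sub_zero, one_mul] at this
    have : (∫ s in (0:ℝ)..1, Polynomial.eval s (p₂ + Polynomial.C (ε/6)))
        = (∫ s in (0:ℝ)..1, Polynomial.eval s p₂) + ε/6 := by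
      simp only [Polynomial.eval_add, Polynomial.eval_C]
      rw [intervalIntegral.integral_add hpoly intervalIntegrable_const,
        intervalIntegral.integral_const, smul_eq_mul, sub_zero, one_mul]
    rw [this]
    linarith

section Karamata
open Polynomial

variable {a : ℕ → ℝ}

lemma rpow_ind_iff {t : ℝ} (ht : 0 < t) {n : ℕ} (hn : 1 ≤ n) :
    (Real.exp (-1) ≤ (n:ℝ) ^ (-t)) ↔ Real.log n ≤ 1/t := by
  have hnpos : (0:ℝ) < n := by exact_mod_cast hn
  rw [Real.rpow_def_of_pos hnpos, Real.exp_le_exp, mul_neg, neg_le_neg_iff, ← le_div_iff₀ ht]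

lemma summable_ind (ha : ∀ n, 0 ≤ a n) (ha0 : a 0 = 0) {t : ℝ} (ht : 0 < t) :
    Summable (fun n : ℕ => a n * (if Real.exp (-1) ≤ (n:ℝ) ^ (-t) then 1 else 0)) := by
  apply summable_of_ne_finset_zero (s := Finset.range (⌈Real.exp (1/t)⌉₊ + 1))
  intro n hn
  rw [Finset.mem_range, not_lt] at hn
  have hn1 : 1 ≤ n := le_trans (Nat.le_add_left 1 _) hn
  have hbig : Real.exp (1/t) < (n:ℝ) := by
    calc Real.exp (1/t) ≤ (⌈Real.exp (1/t)⌉₊ : ℝ) := Nat.le_ceil _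
      _ < (n:ℝ) := by exact_mod_cast Nat.lt_of_lt_of_le (Nat.lt_succ_self _) hn
  have : ¬ (Real.exp (-1) ≤ (n:ℝ) ^ (-t)) := by
    rw [rpow_ind_iff ht hn1, not_le]
    exact (Real.lt_log_iff_exp_lt (by positivity)).mpr hbig
  rw [if_neg this, mul_zero]

lemma karamata_monomial (ha : ∀ n, 0 ≤ a n) (ha0 : a 0 = 0)
    (hsum : ∀ t : ℝ, 0 < t → Summable (fun n : ℕ => a n * (n:ℝ) ^ (-t)))
    {c : ℝ} (hc : Tendsto (fun t : ℝ => t * ∑' n : ℕ, a n * (n:ℝ) ^ (-t))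
      (nhdsWithin 0 (Set.Ioi 0)) (nhds c)) (j : ℕ) :
    Tendsto (fun t : ℝ => t * ∑' n : ℕ, a n * (n:ℝ) ^ (-(((j:ℝ)+1)*t)))
      (nhdsWithin 0 (Set.Ioi 0)) (nhds (c/((j:ℝ)+1))) := by
  have hj : (0:ℝ) < (j:ℝ)+1 := by positivity
  have hmap : Tendsto (fun t : ℝ => ((j:ℝ)+1)*t) (nhdsWithin 0 (Set.Ioi 0))
      (nhdsWithin 0 (Set.Ioi 0)) := by
    have h1 : Tendsto (fun t : ℝ => ((j:ℝ)+1)*t) (nhdsWithin 0 (Set.Ioi 0)) (nhds 0) := by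
      have h2 : Tendsto (fun t : ℝ => ((j:ℝ)+1)*t) (nhds 0) (nhds (((j:ℝ)+1)*(0:ℝ))) :=
        (continuous_const.mul continuous_id).tendsto 0
      rw [mul_zero] at h2
      exact h2.mono_left nhdsWithin_le_nhds
    refine tendsto_nhdsWithin_of_tendsto_nhds_of_eventually_within _ h1 ?_
    filter_upwards [self_mem_nhdsWithin] with t ht
    exact mul_pos hj ht
  have := hc.comp hmap
  have h2 := this.const_mul (((j:ℝ)+1)⁻¹)
  have heq : (fun t : ℝ => ((j:ℝ)+1)⁻¹ * ((fun t : ℝ => t * ∑' n : ℕ, a n * (n:ℝ) ^ (-t)) (((j:ℝ)+1)*t)))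
      = (fun t : ℝ => t * ∑' n : ℕ, a n * (n:ℝ) ^ (-(((j:ℝ)+1)*t))) := by
    funext t
    simp only [Function.comp]
    field_simp
  rw [show (fun t : ℝ => t * ∑' n : ℕ, a n * (n:ℝ) ^ (-(((j:ℝ)+1)*t))) = _ from heq.symm]
  rw [div_eq_inv_mul]
  exact h2

lemma karamata_poly_eq (ha0 : a 0 = 0) {t : ℝ} (ht : 0 < t) (P : Polynomial ℝ) (n : ℕ) :
    a n * (n:ℝ) ^ (-t) * P.eval ((n:ℝ) ^ (-t))
      = ∑ j ∈ Finset.range (P.natDegree + 1), P.coeff j * (a n * (n:ℝ) ^ (-(((j:ℝ)+1)*t))) := by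
  rcases Nat.eq_zero_or_pos n with rfl | hn
  · simp [ha0]
  have hnpos : (0:ℝ) < n := by exact_mod_cast hn
  rw [Polynomial.eval_eq_sum_range, Finset.mul_sum]
  apply Finset.sum_congr rfl
  intro j _
  have hpow : ((n:ℝ) ^ (-t)) ^ j = (n:ℝ) ^ (-(t*(j:ℝ))) := by
    rw [← Real.rpow_natCast ((n:ℝ) ^ (-t)) j, ← Real.rpow_mul hnpos.le]
    congr 1; ring
  have hmul : (n:ℝ) ^ (-t) * (n:ℝ) ^ (-(t*(j:ℝ))) = (n:ℝ) ^ (-(((j:ℝ)+1)*t)) := by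
    rw [← Real.rpow_add hnpos]; congr 1; ring
  rw [hpow]
  linear_combination (P.coeff j * a n) * hmul

lemma karamata_poly (ha : ∀ n, 0 ≤ a n) (ha0 : a 0 = 0)
    (hsum : ∀ t : ℝ, 0 < t → Summable (fun n : ℕ => a n * (n:ℝ) ^ (-t)))
    {c : ℝ} (hc : Tendsto (fun t : ℝ => t * ∑' n : ℕ, a n * (n:ℝ) ^ (-t))
      (nhdsWithin 0 (Set.Ioi 0)) (nhds c)) (P : Polynomial ℝ) :
    Tendsto (fun t : ℝ => t * ∑' n : ℕ, a n * (n:ℝ) ^ (-t) * P.eval ((n:ℝ) ^ (-t)))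
      (nhdsWithin 0 (Set.Ioi 0)) (nhds (c * ∫ s in (0:ℝ)..1, P.eval s)) := by
  have hInt : (∫ s in (0:ℝ)..1, P.eval s)
      = ∑ j ∈ Finset.range (P.natDegree+1), P.coeff j * (1/((j:ℝ)+1)) := by
    rw [intervalIntegral.integral_congr
      (g := fun s => ∑ j ∈ Finset.range (P.natDegree+1), P.coeff j * s^j)
      (fun x _ => Polynomial.eval_eq_sum_range x)]
    rw [intervalIntegral.integral_finset_sum (f := fun j (s : ℝ) => P.coeff j * s ^ j)
      (fun j _ => ((continuous_const.mul (continuous_pow j) : Continuous fun s : ℝ => P.coeff j * s ^ j).intervalIntegrable _ _))]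
    apply Finset.sum_congr rfl
    intro j _
    rw [intervalIntegral.integral_const_mul, integral_pow]
    push_cast
    norm_num
  have hlim : Tendsto (fun t : ℝ => ∑ j ∈ Finset.range (P.natDegree+1),
      P.coeff j * (t * ∑' n : ℕ, a n * (n:ℝ) ^ (-(((j:ℝ)+1)*t))))
      (nhdsWithin 0 (Set.Ioi 0))
      (nhds (∑ j ∈ Finset.range (P.natDegree+1), P.coeff j * (c/((j:ℝ)+1)))) := by
    apply tendsto_finset_sum
    intro j _
    exact (karamata_monomial ha ha0 hsum hc j).const_mul _
  have hval : (∑ j ∈ Finset.range (P.natDegree+1), P.coeff j * (c/((j:ℝ)+1)))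
      = c * ∫ s in (0:ℝ)..1, P.eval s := by
    rw [hInt, Finset.mul_sum]
    apply Finset.sum_congr rfl
    intro j _
    ring
  rw [← hval]
  apply hlim.congr'
  filter_upwards [self_mem_nhdsWithin] with t ht
  have htpos : (0:ℝ) < t := ht
  have heq1 : ∑' n : ℕ, a n * (n:ℝ) ^ (-t) * P.eval ((n:ℝ) ^ (-t))
      = ∑ j ∈ Finset.range (P.natDegree+1), ∑' n : ℕ, P.coeff j * (a n * (n:ℝ) ^ (-(((j:ℝ)+1)*t))) := by
    rw [← Summable.tsum_finsetSum (fun j _ => ((hsum _ (mul_pos (by positivity) htpos)).mul_left _))]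
    exact tsum_congr (karamata_poly_eq ha0 htpos P)
  rw [heq1, Finset.mul_sum]
  apply Finset.sum_congr rfl
  intro j _
  rw [tsum_mul_left]
  ring

theorem karamata_ind (ha : ∀ n, 0 ≤ a n) (ha0 : a 0 = 0)
    (hsum : ∀ t : ℝ, 0 < t → Summable (fun n : ℕ => a n * (n:ℝ) ^ (-t)))
    {c : ℝ} (hc : Tendsto (fun t : ℝ => t * ∑' n : ℕ, a n * (n:ℝ) ^ (-t))
      (nhdsWithin 0 (Set.Ioi 0)) (nhds c)) :
    Tendsto (fun t : ℝ => t * ∑' n : ℕ, a n * (if Real.exp (-1) ≤ (n:ℝ) ^ (-t) then 1 else 0))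
      (nhdsWithin 0 (Set.Ioi 0)) (nhds c) := by
  have hc0 : 0 ≤ c := by
    refine ge_of_tendsto hc ?_
    filter_upwards [self_mem_nhdsWithin] with t ht
    have htpos : (0:ℝ) < t := ht
    exact mul_nonneg htpos.le (tsum_nonneg fun n => mul_nonneg (ha n) (by positivity))
  rw [Metric.tendsto_nhds]
  intro ε hε
  have hc1 : (0:ℝ) < c + 1 := by linarith
  set ε' := ε / (2*(c+1)) with hε'def
  have hε' : 0 < ε' := by positivity
  obtain ⟨P₁, P₂, hP₁, hP₂, hI₁, hI₂⟩ := exists_poly_sandwich hε'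
  have hcε : c * ε' ≤ ε/2 := by
    rw [hε'def]
    rw [mul_div_assoc']
    rw [div_le_div_iff₀ (by positivity) (by norm_num)]
    nlinarith
  have hv1 : c - ε/2 ≤ c * ∫ s in (0:ℝ)..1, P₁.eval s := by
    have := mul_le_mul_of_nonneg_left hI₁ hc0
    nlinarith
  have hv2 : (c * ∫ s in (0:ℝ)..1, P₂.eval s) ≤ c + ε/2 := by
    have := mul_le_mul_of_nonneg_left hI₂ hc0
    nlinarith
  have h1 := Metric.tendsto_nhds.mp (karamata_poly ha ha0 hsum hc P₁) (ε/2) (by positivity)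
  have h2 := Metric.tendsto_nhds.mp (karamata_poly ha ha0 hsum hc P₂) (ε/2) (by positivity)
  filter_upwards [h1, h2, self_mem_nhdsWithin] with t h1t h2t htmem
  have htpos : (0:ℝ) < t := htmem
  rw [Real.dist_eq, abs_lt] at h1t h2t ⊢
  -- summabilities
  have sInd := summable_ind ha ha0 htpos
  have sP : ∀ P : Polynomial ℝ, Summable (fun n : ℕ => a n * (n:ℝ) ^ (-t) * P.eval ((n:ℝ) ^ (-t))) := by
    intro P
    have heq : (fun n : ℕ => a n * (n:ℝ) ^ (-t) * P.eval ((n:ℝ) ^ (-t)))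
        = fun n => ∑ j ∈ Finset.range (P.natDegree+1), P.coeff j * (a n * (n:ℝ) ^ (-(((j:ℝ)+1)*t))) :=
      funext (karamata_poly_eq ha0 htpos P)
    rw [heq]
    exact summable_sum fun j _ => ((hsum _ (mul_pos (by positivity) htpos)).mul_left _)
  -- pointwise comparisons
  have hpt1 : ∀ n : ℕ, a n * (n:ℝ) ^ (-t) * P₁.eval ((n:ℝ) ^ (-t))
      ≤ a n * (if Real.exp (-1) ≤ (n:ℝ) ^ (-t) then 1 else 0) := by
    intro n
    rcases Nat.eq_zero_or_pos n with rfl | hn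
    · simp [ha0]
    have hs0 : (0:ℝ) < (n:ℝ) ^ (-t) := Real.rpow_pos_of_pos (by exact_mod_cast hn) _
    have hs1 : (n:ℝ) ^ (-t) ≤ 1 :=
      Real.rpow_le_one_of_one_le_of_nonpos (by exact_mod_cast hn) (by linarith)
    have hmem : (n:ℝ) ^ (-t) ∈ Set.Icc (0:ℝ) 1 := ⟨hs0.le, hs1⟩
    have := hP₁ _ hmem
    rw [gK] at this
    split_ifs with hcase
    · rw [if_pos hcase] at this
      calc a n * (n:ℝ) ^ (-t) * P₁.eval ((n:ℝ) ^ (-t))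
          ≤ a n * (n:ℝ) ^ (-t) * ((n:ℝ) ^ (-t))⁻¹ := by
            apply mul_le_mul_of_nonneg_left this (mul_nonneg (ha n) hs0.le)
        _ = a n * 1 := by rw [mul_assoc, mul_inv_cancel₀ hs0.ne']
    · rw [if_neg hcase] at this
      have : a n * (n:ℝ) ^ (-t) * P₁.eval ((n:ℝ) ^ (-t)) ≤ a n * (n:ℝ) ^ (-t) * 0 :=
        mul_le_mul_of_nonneg_left this (mul_nonneg (ha n) hs0.le)
      simpa using this
  have hpt2 : ∀ n : ℕ, a n * (if Real.exp (-1) ≤ (n:ℝ) ^ (-t) then 1 else 0)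
      ≤ a n * (n:ℝ) ^ (-t) * P₂.eval ((n:ℝ) ^ (-t)) := by
    intro n
    rcases Nat.eq_zero_or_pos n with rfl | hn
    · simp [ha0]
    have hs0 : (0:ℝ) < (n:ℝ) ^ (-t) := Real.rpow_pos_of_pos (by exact_mod_cast hn) _
    have hs1 : (n:ℝ) ^ (-t) ≤ 1 :=
      Real.rpow_le_one_of_one_le_of_nonpos (by exact_mod_cast hn) (by linarith)
    have hmem : (n:ℝ) ^ (-t) ∈ Set.Icc (0:ℝ) 1 := ⟨hs0.le, hs1⟩
    have := hP₂ _ hmem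
    rw [gK] at this
    split_ifs with hcase
    · rw [if_pos hcase] at this
      calc a n * 1 = a n * ((n:ℝ) ^ (-t) * ((n:ℝ) ^ (-t))⁻¹) := by
            rw [mul_inv_cancel₀ hs0.ne']
        _ = a n * (n:ℝ) ^ (-t) * ((n:ℝ) ^ (-t))⁻¹ := by ring
        _ ≤ a n * (n:ℝ) ^ (-t) * P₂.eval ((n:ℝ) ^ (-t)) := by
            apply mul_le_mul_of_nonneg_left this (mul_nonneg (ha n) hs0.le)
    · rw [if_neg hcase] at this
      have h0 : 0 ≤ a n * (n:ℝ) ^ (-t) * P₂.eval ((n:ℝ) ^ (-t)) := by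
        have := mul_le_mul_of_nonneg_left this (mul_nonneg (ha n) hs0.le)
        simpa using this
      simpa using h0
  have hcmp1 : t * ∑' n : ℕ, a n * (n:ℝ) ^ (-t) * P₁.eval ((n:ℝ) ^ (-t))
      ≤ t * ∑' n : ℕ, a n * (if Real.exp (-1) ≤ (n:ℝ) ^ (-t) then 1 else 0) :=
    mul_le_mul_of_nonneg_left (Summable.tsum_le_tsum hpt1 (sP P₁) sInd) htpos.le
  have hcmp2 : t * ∑' n : ℕ, a n * (if Real.exp (-1) ≤ (n:ℝ) ^ (-t) then 1 else 0)
      ≤ t * ∑' n : ℕ, a n * (n:ℝ) ^ (-t) * P₂.eval ((n:ℝ) ^ (-t)) :=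
    mul_le_mul_of_nonneg_left (Summable.tsum_le_tsum hpt2 sInd (sP P₂)) htpos.le
  constructor
  · linarith [h1t.1]
  · linarith [h2t.2]

theorem karamata_nat (ha : ∀ n, 0 ≤ a n) (ha0 : a 0 = 0)
    (hsum : ∀ t : ℝ, 0 < t → Summable (fun n : ℕ => a n * (n:ℝ) ^ (-t)))
    {c : ℝ} (hc : Tendsto (fun t : ℝ => t * ∑' n : ℕ, a n * (n:ℝ) ^ (-t))
      (nhdsWithin 0 (Set.Ioi 0)) (nhds c)) :
    Tendsto (fun N : ℕ => (∑ n ∈ Finset.range (N+1), a n) / Real.log N) atTop (nhds c) := by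
  have hmain := karamata_ind ha ha0 hsum hc
  have hloginf : Tendsto (fun N : ℕ => Real.log N) atTop atTop :=
    Real.tendsto_log_atTop.comp tendsto_natCast_atTop_atTop
  have hlog : Tendsto (fun N : ℕ => 1/Real.log N) atTop (nhdsWithin 0 (Set.Ioi 0)) := by
    apply tendsto_nhdsWithin_of_tendsto_nhds_of_eventually_within
    · exact hloginf.inv_tendsto_atTop.congr (fun N => (one_div _).symm)
    · filter_upwards [hloginf.eventually_gt_atTop 0] with N hN
      exact one_div_pos.mpr hN
  have hcomp := hmain.comp hlog
  apply hcomp.congr'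
  filter_upwards [eventually_ge_atTop 2, hloginf.eventually_gt_atTop 0] with N hN2 hlogN
  simp only [Function.comp]
  have hNpos : (0:ℝ) < N := by positivity
  have htN : (0:ℝ) < 1/Real.log N := one_div_pos.mpr hlogN
  have hinv : 1/(1/Real.log N) = Real.log N := by rw [one_div_one_div]
  have htsum : ∑' n : ℕ, a n * (if Real.exp (-1) ≤ (n:ℝ) ^ (-(1/Real.log N)) then 1 else 0)
      = ∑ n ∈ Finset.range (N+1), a n := by
    rw [tsum_eq_sum (s := Finset.range (N+1)) ?_]
    · apply Finset.sum_congr rfl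
      intro n hn
      rcases Nat.eq_zero_or_pos n with rfl | hn1
      · simp [ha0]
      rw [if_pos, mul_one]
      rw [rpow_ind_iff htN hn1, hinv]
      exact Real.log_le_log (by exact_mod_cast hn1)
        (by exact_mod_cast Nat.lt_succ_iff.mp (Finset.mem_range.mp hn))
    · intro n hn
      rw [Finset.mem_range, not_lt] at hn
      have hn1 : 1 ≤ n := le_trans (by linarith) hn
      rw [if_neg, mul_zero]
      rw [rpow_ind_iff htN hn1, hinv, not_le]
      exact Real.log_lt_log hNpos (by exact_mod_cast Nat.lt_of_succ_le hn)
  rw [htsum, one_div, inv_mul_eq_div]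



section NT
open Complex ArithmeticFunction vonMangoldt

variable {q : ℕ} [NeZero q] {a : ZMod q}

lemma tsum_residueClass_eq (ha : IsUnit a) {x : ℝ} (hx : 1 < x) :
    ∑' n : ℕ, residueClass a n / (n : ℝ) ^ x =
      (LFunctionResidueClassAux a x).re + (q.totient : ℝ)⁻¹ / (x - 1) := by
  refine ofReal_injective ?_
  simp only [ofReal_tsum, ofReal_div, ofReal_cpow (Nat.cast_nonneg _), ofReal_natCast,
    ofReal_add, ofReal_inv, ofReal_sub, ofReal_one]
  simp_rw [← LFunctionResidueClassAux_real ha hx,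
    eqOn_LFunctionResidueClassAux ha <| Set.mem_setOf.mpr (ofReal_re x ▸ hx), sub_add_cancel,
    LSeries, LSeries.term]
  refine tsum_congr fun n ↦ ?_
  split_ifs with hn
  · simp only [hn, residueClass_apply_zero, ofReal_zero, zero_div]
  · rfl

lemma summable_residue_rpow {t : ℝ} (ht : 0 < t) :
    Summable (fun n : ℕ => (residueClass a n / n) * (n:ℝ) ^ (-t)) := by
  refine Summable.of_nonneg_of_le
    (fun n => mul_nonneg (div_nonneg (residueClass_nonneg a n) (Nat.cast_nonneg n))
      (by positivity))
    (fun n => ?_)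
    ((Real.summable_nat_rpow.mpr (by linarith : -(1+t/2) < -1)).mul_left (2/t))
  · 
    rcases Nat.eq_zero_or_pos n with rfl | hn
    · rw [Nat.cast_zero, Real.zero_rpow (neg_ne_zero.mpr ht.ne'),
        Real.zero_rpow (neg_ne_zero.mpr (by positivity : (0:ℝ) < 1+t/2).ne'), mul_zero, mul_zero]
    have hnpos : (0:ℝ) < n := by exact_mod_cast hn
    have h1 : residueClass a n / n * (n:ℝ) ^ (-t) ≤ Real.log n / n * (n:ℝ) ^ (-t) := by
      apply mul_le_mul_of_nonneg_right _ (by positivity)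
      gcongr
      exact le_trans (residueClass_le a n) vonMangoldt_le_log
    have h2 : Real.log n ≤ (2/t) * (n:ℝ) ^ (t/2) := by
      have := Real.log_le_rpow_div (Nat.cast_nonneg n) (by positivity : (0:ℝ) < t/2)
      calc Real.log n ≤ (n:ℝ) ^ (t/2) / (t/2) := this
        _ = (2/t) * (n:ℝ) ^ (t/2) := by field_simp
    calc residueClass a n / n * (n:ℝ) ^ (-t) ≤ Real.log n / n * (n:ℝ) ^ (-t) := h1
      _ ≤ ((2/t) * (n:ℝ) ^ (t/2)) / n * (n:ℝ) ^ (-t) := by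
          apply mul_le_mul_of_nonneg_right _ (by positivity)
          gcongr
      _ = (2/t) * (n:ℝ) ^ (-(1+t/2)) := by
          have hkey : (n:ℝ) ^ (t/2) / (n:ℝ) * (n:ℝ) ^ (-t) = (n:ℝ) ^ (-(1+t/2)) := by
            rw [div_mul_eq_mul_div, ← Real.rpow_add hnpos, div_eq_iff hnpos.ne',
              ← Real.rpow_add_one hnpos.ne']
            congr 1
            ring
          rw [mul_div_assoc, mul_assoc, hkey]

lemma pole_limit (ha : IsUnit a) :
    Tendsto (fun t : ℝ => t * ∑' n : ℕ, (residueClass a n / n) * (n:ℝ) ^ (-t))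
      (nhdsWithin 0 (Set.Ioi 0)) (nhds ((q.totient : ℝ)⁻¹)) := by
  -- continuity of the auxiliary function at 1 along our path
  have hmap : Tendsto (fun t : ℝ => ((1+t : ℝ) : ℂ)) (nhdsWithin 0 (Set.Ioi 0))
      (nhdsWithin 1 {s : ℂ | 1 ≤ s.re}) := by
    apply tendsto_nhdsWithin_of_tendsto_nhds_of_eventually_within
    · have : Tendsto (fun t : ℝ => ((1+t : ℝ) : ℂ)) (nhds 0) (nhds ((1+0 : ℝ):ℂ)) := by
        apply Continuous.tendsto
        exact Complex.continuous_ofReal.comp (continuous_const.add continuous_id)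
      rw [show ((1+0:ℝ):ℂ) = 1 by norm_num] at this
      exact this.mono_left nhdsWithin_le_nhds
    · filter_upwards [self_mem_nhdsWithin] with t ht
      simp only [Set.mem_setOf_eq, Complex.ofReal_re]
      have : (0:ℝ) < t := ht
      simp
      linarith
  have hAux : Tendsto (fun t : ℝ => (LFunctionResidueClassAux a ((1+t:ℝ):ℂ)).re)
      (nhdsWithin 0 (Set.Ioi 0)) (nhds ((LFunctionResidueClassAux a 1).re)) := by
    have hcont := (continuousOn_LFunctionResidueClassAux a) 1 (by simp)
    have := (hcont.tendsto).comp hmap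
    exact (Complex.continuous_re.tendsto _).comp this
  have hzero : Tendsto (fun t : ℝ => t * (LFunctionResidueClassAux a ((1+t:ℝ):ℂ)).re)
      (nhdsWithin 0 (Set.Ioi 0)) (nhds 0) := by
    have h0 : Tendsto (fun t : ℝ => t) (nhdsWithin 0 (Set.Ioi 0)) (nhds 0) :=
      tendsto_id.mono_left nhdsWithin_le_nhds
    have hmul := h0.mul hAux
    rw [zero_mul] at hmul
    exact hmul
  have hfinal := hzero.add (tendsto_const_nhds (x := (q.totient : ℝ)⁻¹))
  rw [zero_add] at hfinal
  apply hfinal.congr'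
  filter_upwards [self_mem_nhdsWithin] with t ht
  have htpos : (0:ℝ) < t := ht
  have hx : (1:ℝ) < 1 + t := by linarith
  have hts : ∑' n : ℕ, (residueClass a n / n) * (n:ℝ) ^ (-t)
      = ∑' n : ℕ, residueClass a n / (n : ℝ) ^ (1+t) := by
    apply tsum_congr
    intro n
    rcases Nat.eq_zero_or_pos n with rfl | hn
    · simp
    have hnpos : (0:ℝ) < n := by exact_mod_cast hn
    rw [Real.rpow_add hnpos, Real.rpow_one, Real.rpow_neg hnpos.le]
    field_simp
  rw [hts, tsum_residueClass_eq ha hx, mul_add, add_sub_cancel_left]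
  congr 1
  rw [mul_comm, div_mul_cancel₀ _ htpos.ne']

end NT

section Final
open ArithmeticFunction vonMangoldt

variable {q : ℕ} [NeZero q] {a : ZMod q}

lemma primes_log_div_asymp (ha : IsUnit a) :
    Tendsto (fun N : ℕ => (∑ n ∈ Finset.range (N+1),
        (if n.Prime ∧ (n : ZMod q) = a then Real.log n / n else 0)) / Real.log N)
      atTop (nhds ((q.totient : ℝ)⁻¹)) := by
  have hS : Tendsto (fun N : ℕ => (∑ n ∈ Finset.range (N+1), residueClass a n / n) / Real.log N)
      atTop (nhds ((q.totient : ℝ)⁻¹)) := by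
    apply karamata_nat
    · exact fun n => div_nonneg (residueClass_nonneg a n) (Nat.cast_nonneg n)
    · simp
    · exact fun t ht => summable_residue_rpow ht
    · exact pole_limit ha
  have hsplit : ∀ n : ℕ, residueClass a n / n
      = (if n.Prime ∧ (n : ZMod q) = a then Real.log n / n else 0)
        + (if n.Prime then 0 else residueClass a n) / n := by
    intro n
    by_cases hp : n.Prime
    · by_cases hmod : (n : ZMod q) = a
      · rw [if_pos ⟨hp, hmod⟩, if_pos hp]
        rw [zero_div, add_zero]
        congr 1
        rw [show residueClass a n = Set.indicator {n : ℕ | (n : ZMod q) = a} (vonMangoldt ·) n from rfl,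
          Set.indicator_apply, if_pos (show n ∈ {n : ℕ | (n : ZMod q) = a} from hmod)]
        exact vonMangoldt_apply_prime hp
      · rw [if_neg (fun h => hmod h.2), if_pos hp, zero_add, zero_div]
        rw [show residueClass a n = Set.indicator {n : ℕ | (n : ZMod q) = a} (vonMangoldt ·) n from rfl,
          Set.indicator_apply, if_neg (show ¬ n ∈ {n : ℕ | (n : ZMod q) = a} from hmod)]
        simp
    · rw [if_neg (fun h => hp h.1), if_neg hp, zero_add]
  have henonneg : ∀ n : ℕ, 0 ≤ (if n.Prime then 0 else residueClass a n) / n := by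
    intro n
    apply div_nonneg _ (Nat.cast_nonneg n)
    split_ifs
    · exact le_rfl
    · exact residueClass_nonneg a n
  have hsummable := summable_residueClass_non_primes_div a
  set D := ∑' n : ℕ, (if n.Prime then 0 else residueClass a n) / n with hD
  have hEbound : ∀ N : ℕ, ∑ n ∈ Finset.range (N+1), (if n.Prime then 0 else residueClass a n) / n ≤ D :=
    fun N => Summable.sum_le_tsum _ (fun i _ => henonneg i) hsummable
  have hE0 : ∀ N : ℕ, 0 ≤ ∑ n ∈ Finset.range (N+1), (if n.Prime then 0 else residueClass a n) / n :=
    fun N => Finset.sum_nonneg fun i _ => henonneg i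
  have hlog : Tendsto (fun N : ℕ => Real.log N) atTop atTop :=
    Real.tendsto_log_atTop.comp tendsto_natCast_atTop_atTop
  have hE : Tendsto (fun N : ℕ => (∑ n ∈ Finset.range (N+1),
      (if n.Prime then 0 else residueClass a n) / n) / Real.log N) atTop (nhds 0) := by
    apply tendsto_of_tendsto_of_tendsto_of_le_of_le' (tendsto_const_nhds (x := (0:ℝ)))
      (tendsto_const_nhds.div_atTop hlog : Tendsto (fun N : ℕ => D / Real.log N) atTop (nhds 0))
    · filter_upwards [hlog.eventually_gt_atTop 0] with N hN
      exact div_nonneg (hE0 N) hN.le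
    · filter_upwards [hlog.eventually_gt_atTop 0] with N hN
      gcongr
      exact hEbound N
  have := hS.sub hE
  rw [sub_zero] at this
  apply this.congr
  intro N
  rw [div_sub_div_same]
  congr 1
  rw [← Finset.sum_sub_distrib]
  apply Finset.sum_congr rfl
  intro n _
  rw [hsplit n]
  ring

end Final

noncomputable def wFun : ℕ → ℝ := fun n => (Real.log n)⁻¹
noncomputable def bFun : ℕ → ℝ := fun i => if 2 ≤ i then (wFun i - wFun (i+1)) * Real.log i else 0
noncomputable def LLn : ℕ → ℝ := fun n => Real.log (Real.log n)

lemma telescope_Ico (f : ℕ → ℝ) {m n : ℕ} (h : m ≤ n) :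
    ∑ i ∈ Finset.Ico m n, (f (i+1) - f i) = f n - f m := by
  induction n, h using Nat.le_induction with
  | base => simp
  | succ n hmn ih => rw [Finset.sum_Ico_succ_top hmn, ih]; ring

lemma log_mono_nat {i : ℕ} (hi : 2 ≤ i) :
    0 < Real.log i ∧ Real.log 2 ≤ Real.log i ∧ Real.log i ≤ Real.log ((i:ℝ)+1) := by
  have h1 : (1:ℝ) < (i:ℝ) := by exact_mod_cast hi
  refine ⟨Real.log_pos h1, Real.log_le_log (by norm_num) (by exact_mod_cast hi), ?_⟩
  exact Real.log_le_log (by positivity) (by linarith)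

lemma bFun_nonneg : ∀ i, 0 ≤ bFun i := by
  intro i
  rw [bFun]
  split_ifs with hi
  · obtain ⟨hL, hL2, hL'⟩ := log_mono_nat hi
    have : wFun (i+1) ≤ wFun i := by
      rw [wFun, wFun]
      push_cast
      exact inv_anti₀ hL hL'
    exact mul_nonneg (by linarith) hL.le
  · exact le_rfl

lemma b_est {i : ℕ} (hi : 2 ≤ i) :
    bFun i ≤ LLn (i+1) - LLn i ∧
      LLn (i+1) - LLn i - bFun i ≤ ((Real.log 2)^2)⁻¹ * (((i:ℝ))^2)⁻¹ := by
  obtain ⟨hL, hL2, hL'⟩ := log_mono_nat hi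
  set L : ℝ := Real.log i with hLdef
  set L' : ℝ := Real.log ((i:ℝ)+1) with hL'def
  have hL'pos : 0 < L' := lt_of_lt_of_le hL hL'
  have hL2' : Real.log 2 ≤ L' := le_trans hL2 hL'
  have hlog2 : (0:ℝ) < Real.log 2 := Real.log_pos (by norm_num)
  have hipos : (0:ℝ) < (i:ℝ) := by positivity
  have hdiff0 : 0 ≤ L' - L := by linarith
  have hdiff : L' - L ≤ 1/(i:ℝ) := by
    rw [hL'def, hLdef, ← Real.log_div (by positivity) (by positivity)]
    have h1 := Real.log_le_sub_one_of_pos (show (0:ℝ) < ((i:ℝ)+1)/(i:ℝ) by positivity)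
    have h2 : ((i:ℝ)+1)/(i:ℝ) - 1 = 1/(i:ℝ) := by field_simp; ring
    linarith
  have hb_eq : bFun i = (L' - L)/L' := by
    rw [bFun, if_pos hi, wFun, wFun]
    push_cast
    rw [← hLdef, ← hL'def]
    field_simp
  have hδ_eq : LLn (i+1) - LLn i = Real.log L' - Real.log L := by
    rw [LLn, LLn]
    push_cast
    rw [← hLdef, ← hL'def]
  have hlower : (L' - L)/L' ≤ Real.log L' - Real.log L := by
    have h1 := Real.log_le_sub_one_of_pos (show (0:ℝ) < L/L' by positivity)
    rw [Real.log_div hL.ne' hL'pos.ne'] at h1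
    have h2 : L/L' - 1 = -((L' - L)/L') := by field_simp; ring
    linarith
  have hupper : Real.log L' - Real.log L ≤ (L' - L)/L := by
    have h1 := Real.log_le_sub_one_of_pos (show (0:ℝ) < L'/L by positivity)
    rw [Real.log_div hL'pos.ne' hL.ne'] at h1
    have h2 : L'/L - 1 = (L' - L)/L := by field_simp
    linarith
  constructor
  · rw [hb_eq, hδ_eq]; exact hlower
  · rw [hb_eq, hδ_eq]
    have hkey : (L' - L)/L - (L' - L)/L' = (L' - L)^2/(L * L') := by
      field_simp
    have hbound : (L' - L)^2/(L * L') ≤ ((Real.log 2)^2)⁻¹ * (((i:ℝ))^2)⁻¹ := by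
      have h1 : (L' - L)^2 ≤ (1/(i:ℝ))^2 := by
        apply pow_le_pow_left₀ hdiff0 hdiff
      have h2 : (Real.log 2)^2 ≤ L * L' := by nlinarith
      calc (L' - L)^2/(L * L') ≤ (1/(i:ℝ))^2 / (Real.log 2)^2 :=
            div_le_div₀ (by positivity) h1 (by positivity) h2
        _ = ((Real.log 2)^2)⁻¹ * (((i:ℝ))^2)⁻¹ := by
            rw [one_div, div_eq_mul_inv, mul_comm, inv_pow]
    linarith [hkey, hbound, hupper, hlower]

lemma summable_err : Summable (fun i : ℕ => ((Real.log 2)^2)⁻¹ * (((i:ℝ))^2)⁻¹) := by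
  apply Summable.mul_left
  have := Real.summable_one_div_nat_pow.mpr (show 1 < 2 by norm_num)
  simpa [one_div] using this

lemma LLn_atTop : Tendsto LLn atTop atTop := by
  have h1 : Tendsto (fun N : ℕ => Real.log N) atTop atTop :=
    Real.tendsto_log_atTop.comp tendsto_natCast_atTop_atTop
  exact Real.tendsto_log_atTop.comp h1

lemma B_div_LLn : Tendsto (fun N => (∑ i ∈ Finset.range N, bFun i) / LLn N) atTop (nhds 1) := by
  set R := ∑' i : ℕ, ((Real.log 2)^2)⁻¹ * (((i:ℝ))^2)⁻¹ with hR
  have herrnn : ∀ i : ℕ, (0:ℝ) ≤ ((Real.log 2)^2)⁻¹ * (((i:ℝ))^2)⁻¹ := fun i => by positivity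
  have hBrepr : ∀ N : ℕ, 2 ≤ N → ∑ i ∈ Finset.range N, bFun i
      = (LLn N - LLn 2) - ∑ i ∈ Finset.Ico 2 N, ((LLn (i+1) - LLn i) - bFun i) := by
    intro N hN
    have h1 : ∑ i ∈ Finset.range N, bFun i = ∑ i ∈ Finset.Ico 2 N, bFun i := by
      rw [Finset.range_eq_Ico, ← Finset.sum_Ico_consecutive _ (by omega : 0 ≤ 2) hN]
      have h0 : ∑ i ∈ Finset.Ico 0 2, bFun i = 0 := by
        rw [show Finset.Ico 0 2 = ({0, 1} : Finset ℕ) from rfl]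
        rw [Finset.sum_insert (by norm_num), Finset.sum_singleton]
        simp [bFun]
      rw [h0, zero_add]
    rw [h1, ← telescope_Ico LLn hN, ← Finset.sum_sub_distrib]
    apply Finset.sum_congr rfl
    intro i _
    ring
  have hρnn : ∀ N : ℕ, 0 ≤ ∑ i ∈ Finset.Ico 2 N, ((LLn (i+1) - LLn i) - bFun i) := by
    intro N
    apply Finset.sum_nonneg
    intro i hi
    have := (b_est (Finset.mem_Ico.mp hi).1).1
    linarith
  have hρle : ∀ N : ℕ, ∑ i ∈ Finset.Ico 2 N, ((LLn (i+1) - LLn i) - bFun i) ≤ R := by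
    intro N
    calc ∑ i ∈ Finset.Ico 2 N, ((LLn (i+1) - LLn i) - bFun i)
        ≤ ∑ i ∈ Finset.Ico 2 N, ((Real.log 2)^2)⁻¹ * (((i:ℝ))^2)⁻¹ :=
          Finset.sum_le_sum fun i hi => (b_est (Finset.mem_Ico.mp hi).1).2
      _ ≤ R := Summable.sum_le_tsum _ (fun i _ => herrnn i) summable_err
  have hdiff : Tendsto (fun N => (∑ i ∈ Finset.range N, bFun i) / LLn N - 1) atTop (nhds 0) := by
    refine squeeze_zero_norm' ?_
      (((tendsto_const_nhds (x := |LLn 2| + R)).div_atTop LLn_atTop))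
    · filter_upwards [eventually_ge_atTop 2, LLn_atTop.eventually_gt_atTop 0] with N hN2 hLL
      have hrepr := hBrepr N hN2
      have h1 := hρnn N
      have h2 := hρle N
      have hRnn : 0 ≤ R := le_trans (hρnn 2) (hρle 2)
      rw [Real.norm_eq_abs]
      have heq : (∑ i ∈ Finset.range N, bFun i) / LLn N - 1
          = ((∑ i ∈ Finset.range N, bFun i) - LLn N) / LLn N := by
        field_simp
      rw [heq, abs_div, abs_of_pos hLL]
      gcongr
      rw [abs_le]
      constructor
      · have hA := le_abs_self (LLn 2)
        have hB := neg_abs_le (LLn 2)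
        linarith
      · have hA := le_abs_self (LLn 2)
        have hB := neg_abs_le (LLn 2)
        linarith
  have := hdiff.add_const 1
  rw [zero_add] at this
  apply this.congr
  intro N
  ring

lemma B_atTop : Tendsto (fun N => ∑ i ∈ Finset.range N, bFun i) atTop atTop := by
  have h := B_div_LLn.pos_mul_atTop one_pos LLn_atTop
  apply h.congr'
  filter_upwards [LLn_atTop.eventually_gt_atTop 0] with N hLL
  rw [div_mul_cancel₀ _ hLL.ne']

noncomputable def dFun (q : ℕ) (a : ZMod q) : ℕ → ℝ :=
  fun n => if n.Prime ∧ (n : ZMod q) = a then Real.log n / n else 0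

noncomputable def TdFun (q : ℕ) (a : ZMod q) : ℕ → ℝ :=
  fun m => ∑ i ∈ Finset.range m, dFun q a i

lemma TdFun_two (q : ℕ) (a : ZMod q) : TdFun q a 2 = 0 := by
  rw [TdFun]
  rw [Finset.sum_range_succ, Finset.sum_range_one]
  simp [dFun]

lemma hbx (q : ℕ) (a : ZMod q) (i : ℕ) :
    (wFun i - wFun (i+1)) * TdFun q a (i+1) = bFun i * (TdFun q a (i+1) / Real.log i) := by
  rcases (show i = 0 ∨ i = 1 ∨ 2 ≤ i by omega) with rfl | rfl | hi
  · rw [show wFun 0 = 0 by simp [wFun], show wFun 1 = 0 by simp [wFun],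
      show bFun 0 = 0 by rw [bFun]; norm_num]
    ring
  · rw [TdFun_two, show bFun 1 = 0 by rw [bFun]; norm_num]
    ring
  · have hL : 0 < Real.log i := (log_mono_nat hi).1
    simp only [bFun, if_pos hi]
    rw [mul_assoc, mul_comm (Real.log (i:ℝ)) (TdFun q a (i+1) / Real.log (i:ℝ)),
      div_mul_cancel₀ _ hL.ne']

lemma abel_identity (q : ℕ) (a : ZMod q) (N : ℕ) :
    ∑ i ∈ Finset.range (N+1), wFun i * dFun q a i
      = wFun N * TdFun q a (N+1) + ∑ i ∈ Finset.range N, bFun i * (TdFun q a (i+1) / Real.log i) := by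
  have h := Finset.sum_range_by_parts wFun (dFun q a) (N+1)
  simp only [smul_eq_mul, Nat.add_sub_cancel] at h
  rw [h, sub_eq_add_neg, ← Finset.sum_neg_distrib]
  congr 1
  apply Finset.sum_congr rfl
  intro i _
  rw [← hbx q a i]
  simp only [TdFun]
  ring

lemma U_asymp (q : ℕ) [NeZero q] (a : ZMod q) (ha : IsUnit a) :
    Tendsto (fun N : ℕ => (∑ i ∈ Finset.range (N+1), wFun i * dFun q a i) / LLn N)
      atTop (nhds ((q.totient : ℝ)⁻¹)) := by
  have hx : Tendsto (fun N : ℕ => TdFun q a (N+1) / Real.log N) atTop (nhds ((q.totient : ℝ)⁻¹)) := by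
    simpa only [TdFun, dFun] using primes_log_div_asymp ha
  have hces := weighted_cesaro bFun_nonneg hx B_atTop
  have hVLL : Tendsto (fun N : ℕ =>
      (∑ i ∈ Finset.range N, bFun i * (TdFun q a (i+1) / Real.log i)) / LLn N)
      atTop (nhds ((q.totient : ℝ)⁻¹)) := by
    have hmul := hces.mul B_div_LLn
    rw [mul_one] at hmul
    apply hmul.congr'
    filter_upwards [B_atTop.eventually_gt_atTop 0] with N hB
    rw [div_mul_div_comm,
      mul_comm (∑ i ∈ Finset.range N, bFun i * (TdFun q a (i+1) / Real.log i))
        (∑ i ∈ Finset.range N, bFun i),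
      mul_div_mul_left _ _ hB.ne']
  have hfirst : Tendsto (fun N : ℕ => wFun N * TdFun q a (N+1) / LLn N) atTop (nhds 0) := by
    apply (Tendsto.div_atTop hx LLn_atTop).congr
    intro N
    rw [wFun, inv_mul_eq_div]
  have hsum := hfirst.add hVLL
  rw [zero_add] at hsum
  apply hsum.congr
  intro N
  rw [abel_identity q a N, add_div]

/-- Mertens' theorem in arithmetic progressions: for `q` prime and `1 ≤ l ≤ q - 1`,
`∑_{p ≤ n, p ≡ l (mod q)} 1/p ∼ (1/(q-1)) ln ln n`. -/
theorem mertens_arithmetic_progression (q : ℕ) (hq : q.Prime) (l : ℕ) (hl : 1 ≤ l)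
    (hl' : l ≤ q - 1) :
    Tendsto
      (fun n : ℕ =>
        (∑ p ∈ (Finset.range (n + 1)).filter (fun p => Nat.Prime p ∧ p % q = l),
          (1 : ℝ) / p) / Real.log (Real.log n))
      atTop (nhds (1 / ((q : ℝ) - 1))) := by
  haveI : NeZero q := ⟨hq.pos.ne'⟩
  have hq2 : 2 ≤ q := hq.two_le
  have hlq : l < q := by omega
  have ha : IsUnit ((l : ZMod q)) := by
    rw [ZMod.isUnit_iff_coprime]
    have hnd : ¬ q ∣ l := fun hdvd => absurd (Nat.le_of_dvd (by omega) hdvd) (by omega)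
    exact ((Nat.Prime.coprime_iff_not_dvd hq).mpr hnd).symm
  have hmodeq : ∀ n : ℕ, ((n : ZMod q) = (l : ZMod q) ↔ n % q = l) := by
    intro n
    rw [ZMod.natCast_eq_natCast_iff, Nat.ModEq, Nat.mod_eq_of_lt hlq]
  have hc0val : ((q.totient : ℝ))⁻¹ = 1 / ((q:ℝ) - 1) := by
    rw [Nat.totient_prime hq, Nat.cast_sub (by omega : 1 ≤ q), Nat.cast_one, one_div]
  have hU := U_asymp q (l : ZMod q) ha
  rw [hc0val] at hU
  apply hU.congr
  intro N
  simp only [LLn]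
  congr 1
  rw [Finset.sum_filter]
  apply Finset.sum_congr rfl
  intro n _
  by_cases hp : n.Prime ∧ n % q = l
  · rw [if_pos hp]
    have hmod : (n : ZMod q) = (l : ZMod q) := (hmodeq n).mpr hp.2
    have hLpos : 0 < Real.log n := Real.log_pos (by exact_mod_cast hp.1.one_lt)
    have hn0 : (n:ℝ) ≠ 0 := by
      have := hp.1.pos
      positivity
    simp only [wFun, dFun, if_pos (And.intro hp.1 hmod)]
    field_simp
  · rw [if_neg hp]
    have hnot : ¬(n.Prime ∧ (n : ZMod q) = (l : ZMod q)) := fun h => hp ⟨h.1, (hmodeq n).mp h.2⟩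
    simp only [wFun, dFun, if_neg hnot, mul_zero]
end Karamata
end
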